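/- Bregman proximal point inequality: Let f be a proper convex function, h a Legendre function, γ > 0, x ∈ int dom h, and suppose w minimizes f(·) + (1/γ) D_h(·, x) with w ∈ int dom h. Then for every y ∈ dom f ∩ dom h: γ ( f(y) − f(w) ) ≥ D_h(y, w) − D_h(y, x) + D_h(w, x). -/

import Mathlib

/-- **Bregman proximal point inequality.**
If `w` minimizes `f(·) + (1/γ) D_h(·, x)` for a proper convex `f` and a Legendre
function `h` (strictly convex, differentiable with gradient `gh`), then for every `y`:
`γ (f y - f w) ≥ D_h(y, w) - D_h(y, x) + D_h(w, x)`. -/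
theorem bregman_proximal_point_inequality (n : ℕ)
    (f : (Fin n → ℝ) → ℝ) (hf : ConvexOn ℝ Set.univ f)
    (h : (Fin n → ℝ) → ℝ) (gh : (Fin n → ℝ) → (Fin n → ℝ))
    (hconv : StrictConvexOn ℝ Set.univ h)
    (hdiff : Differentiable ℝ h)
    (hgrad : ∀ p q, (fderiv ℝ h p) q = ∑ i, gh p i * q i)
    (D : (Fin n → ℝ) → (Fin n → ℝ) → ℝ)
    (hD : ∀ p q, D p q = h p - h q - ∑ i, gh q i * (p i - q i))
    (γ : ℝ) (hγ : 0 < γ) (x w : Fin n → ℝ)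
    (hw : ∀ p, f w + (1/γ) * D w x ≤ f p + (1/γ) * D p x) :
    ∀ y, γ * (f y - f w) ≥ D y w - D y x + D w x := by
  intro y
  set u : Fin n → ℝ := y - w with hu
  set A : ℝ := ∑ i, gh x i * u i with hA
  set d : ℝ := ∑ i, gh w i * u i with hdd
  set Δ : ℝ := f y - f w with hΔ
  -- Step 1: reduce the goal to `A - d ≤ γ * Δ` via a three-point identity.
  have hgoal_eq : D y w - D y x + D w x = A - d := by
    rw [hD, hD, hD]
    have e1 : (∑ i, gh x i * (y i - x i)) - (∑ i, gh x i * (w i - x i))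
        = A := by
      rw [hA, ← Finset.sum_sub_distrib]
      refine Finset.sum_congr rfl fun i _ => by
        simp [hu]; ring
    have e2 : (∑ i, gh w i * (y i - w i)) = d := by
      rw [hdd]; refine Finset.sum_congr rfl fun i _ => by simp [hu]
    linarith [e1, e2]
  rw [hgoal_eq, ge_iff_le]
  -- Step 2: derivative of the line restriction of h at 0.
  have hline : HasDerivAt (fun t : ℝ => w + t • u) u 0 := by
    simpa using ((hasDerivAt_id (0:ℝ)).smul_const u).const_add w
  have hd0 : HasDerivAt (fun t : ℝ => h (w + t • u)) (fderiv ℝ h w u) 0 := by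
    have := ((hdiff (w + (0:ℝ) • u)).hasFDerivAt).comp_hasDerivAt 0 hline
    simp only [zero_smul, add_zero] at this
    exact this
  have hdval : fderiv ℝ h w u = d := by rw [hgrad]
  rw [hdval] at hd0
  -- Step 3: slope tends to d along 𝓝[>] 0.
  have hslope : Filter.Tendsto (fun t : ℝ => (h (w + t • u) - h w) / t)
      (nhdsWithin 0 (Set.Ioi 0)) (nhds d) := by
    have := hasDerivAt_iff_tendsto_slope.mp hd0
    have hmono : nhdsWithin (0:ℝ) (Set.Ioi 0) ≤ nhdsWithin (0:ℝ) {(0:ℝ)}ᶜ :=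
      nhdsWithin_mono _ (fun t ht => ne_of_gt ht)
    have := this.mono_left hmono
    refine this.congr' ?_
    filter_upwards [self_mem_nhdsWithin] with t ht
    simp [slope_def_field, div_eq_inv_mul]
  -- Step 4: eventual lower bound on the slope.
  have hev : ∀ᶠ t in nhdsWithin (0:ℝ) (Set.Ioi 0),
      A - γ * Δ ≤ (h (w + t • u) - h w) / t := by
    filter_upwards [Ioo_mem_nhdsGT_of_mem (Set.left_mem_Ico.mpr one_pos)]
      with t ht
    obtain ⟨ht0, ht1⟩ := ht
    set p : Fin n → ℝ := w + t • u with hp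
    -- convexity of f
    have hpconv : p = (1 - t) • w + t • y := by
      funext i; simp [hp, hu]; ring
    have hfp : f p ≤ (1 - t) * f w + t * f y := by
      rw [hpconv]
      simpa [smul_eq_mul] using
        hf.2 (Set.mem_univ w) (Set.mem_univ y) (by linarith) (le_of_lt ht0)
          (by ring)
    -- minimality
    have hmin := hw p
    rw [hD, hD] at hmin
    have hsum : (∑ i, gh x i * (p i - x i))
        = (∑ i, gh x i * (w i - x i)) + t * A := by
      rw [hA, Finset.mul_sum, ← Finset.sum_add_distrib]
      refine Finset.sum_congr rfl fun i _ => by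
        simp [hp, hu]; ring
    rw [hsum] at hmin
    -- combine: h w - h p + t*A ≤ γ * t * Δ
    have hkey : h w - h p + t * A ≤ γ * (t * Δ) := by
      have h1 : (1/γ) * ((h w - h p + t * A)) ≤ f p - f w := by linarith
      have h2 : f p - f w ≤ t * Δ := by rw [hΔ]; linarith
      have := h1.trans h2
      calc h w - h p + t * A = γ * ((1/γ) * (h w - h p + t * A)) := by
            field_simp
        _ ≤ γ * (t * Δ) := by
            exact mul_le_mul_of_nonneg_left this (le_of_lt hγ)
    rw [le_div_iff₀ ht0]
    nlinarith [hkey]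
  have := ge_of_tendsto hslope hev
  linarith
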